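/- Let R be a unital ring, m ≥ 3, and n ∈ ℤ. In E_m(R) with its natural finite-index-free setting, the element E_{1,2}(n) (n ∈ ℤ acting via n·1_R) can be written as a word in the generators {E_{i,j}(±1) : i ≠ j} of length at most C·(1 + log₂(1 + |n|)) for some constant C depending only on m. -/

import Mathlib

open Matrix


namespace ElemWordAux

def av (v : ℤ × ℤ) : ℤ × ℤ := (2 * v.1 + v.2, v.1 + v.2)

def bv (v : ℤ × ℤ) : ℤ × ℤ := (v.1 - v.2, 2 * v.2 - v.1)

lemma av_bv (v : ℤ × ℤ) : av (bv v) = v := by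
  obtain ⟨x, z⟩ := v
  simp only [av, bv, Prod.mk.injEq]; constructor <;> ring

lemma av_add (v w : ℤ × ℤ) : av (v + w) = av v + av w := by
  simp only [av, Prod.fst_add, Prod.snd_add, Prod.mk_add_mk, Prod.mk.injEq]
  constructor <;> ring

lemma bv_add (v w : ℤ × ℤ) : bv (v + w) = bv v + bv w := by
  simp only [bv, Prod.fst_add, Prod.snd_add, Prod.mk_add_mk, Prod.mk.injEq]
  constructor <;> ring

lemma aviter_add (k : ℕ) (v w : ℤ × ℤ) : av^[k] (v + w) = av^[k] v + av^[k] w := by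
  induction k generalizing v w with
  | zero => simp
  | succ k ih => simp only [Function.iterate_succ_apply, av_add, ih]

lemma aviter_bviter (k : ℕ) (v : ℤ × ℤ) : av^[k] (bv^[k] v) = v := by
  induction k generalizing v with
  | zero => simp
  | succ k ih =>
    rw [Function.iterate_succ_apply', Function.iterate_succ_apply, ih, av_bv]

def pq : ℕ → ℤ × ℤ
  | 0 => (0, 1)
  | k + 1 => av (pq k)

def ell (k : ℕ) : ℤ := (pq k).2 + (pq (k + 1)).2

lemma aviter_single (k : ℕ) (c : ℤ) :
    av^[k] (0, c) = (c * (pq k).1, c * (pq k).2) := by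
  induction k with
  | zero => simp [pq]
  | succ k ih =>
    rw [Function.iterate_succ_apply', ih]
    simp only [show ∀ j, pq (j + 1) = av (pq j) from fun _ => rfl, av, Prod.mk.injEq]
    constructor <;> ring

lemma bviter_single (k : ℕ) (c : ℤ) :
    bv^[k] (0, c) = (-(c * (pq k).1), c * (pq (k + 1)).2) := by
  induction k with
  | zero => simp [pq, av]
  | succ k ih =>
    rw [Function.iterate_succ_apply', ih]
    simp only [show ∀ j, pq (j + 1) = av (pq j) from fun _ => rfl, bv, av, Prod.mk.injEq]
    constructor <;> ring

def vec : List ℤ → ℤ × ℤ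
  | [] => (0, 0)
  | c :: t => bv (vec t) + (0, c)

lemma vec_append (xs ys : List ℤ) :
    vec (xs ++ ys) = vec xs + bv^[xs.length] (vec ys) := by
  induction xs with
  | nil => simp [vec]
  | cons c t ih =>
    rw [List.cons_append]
    show bv (vec (t ++ ys)) + (0, c) = (bv (vec t) + (0, c)) + _
    rw [ih, bv_add, List.length_cons, Function.iterate_succ_apply']
    abel

def sym (e : ℕ → ℤ) : ℕ → List ℤ
  | 0 => [e 0]
  | k + 1 => e (k + 1) :: (sym e k ++ [e (k + 1)])

lemma sym_length (e : ℕ → ℤ) (k : ℕ) : (sym e k).length = 2 * k + 1 := by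
  induction k with
  | zero => rfl
  | succ k ih => simp only [sym, List.length_cons, List.length_append, List.length_nil, ih]; omega

def N (e : ℕ → ℤ) : ℕ → ℤ
  | 0 => e 0
  | k + 1 => N e k + e (k + 1) * ell (k + 1)

lemma key_arith (e : ℕ → ℤ) (K : ℕ) : av^[K] (vec (sym e K)) = (0, N e K) := by
  induction K with
  | zero => simp [sym, vec, bv, N]
  | succ K ih =>
    have hlen : (sym e K).length = 2 * K + 1 := sym_length e K
    have hv : vec [e (K + 1)] = (0, e (K + 1)) := by simp [vec, bv]
    have h1 : vec (sym e (K + 1)) =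
        bv (vec (sym e K)) + bv^[2 * K + 2] (0, e (K + 1)) + (0, e (K + 1)) := by
      show vec (e (K + 1) :: (sym e K ++ [e (K + 1)])) = _
      show bv (vec (sym e K ++ [e (K + 1)])) + (0, e (K + 1)) = _
      rw [vec_append, hlen, hv, bv_add, ← Function.iterate_succ_apply' bv (2 * K + 1)]
    rw [h1, aviter_add, aviter_add]
    have h2 : av^[K + 1] (bv (vec (sym e K))) = (0, N e K) := by
      rw [Function.iterate_succ_apply, av_bv, ih]
    have h3 : av^[K + 1] (bv^[2 * K + 2] (0, e (K + 1))) = bv^[K + 1] (0, e (K + 1)) := by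
      rw [show (2 * K + 2) = (K + 1) + (K + 1) from by omega,
        Function.iterate_add_apply bv (K + 1) (K + 1), aviter_bviter]
    rw [h2, h3, aviter_single, bviter_single]
    show _ = (0, N e K + e (K + 1) * ell (K + 1))
    simp only [Prod.mk_add_mk, Prod.mk.injEq, ell]
    constructor <;> ring



lemma pq_succ (k : ℕ) : pq (k + 1) = (2 * (pq k).1 + (pq k).2, (pq k).1 + (pq k).2) := rfl

lemma pq_facts : ∀ k, 0 ≤ (pq k).1 ∧ 1 ≤ (pq k).2 ∧ (pq k).1 ≤ 2 * (pq k).2 ∧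
    (1 ≤ k → (pq k).2 ≤ (pq k).1) := by
  intro k
  induction k with
  | zero => simp [pq]
  | succ k ih =>
    rw [pq_succ]
    rcases Nat.eq_zero_or_pos k with hk | hk
    · subst hk; simp [pq]
    · obtain ⟨h1, h2, h3, h4⟩ := ih
      have := h4 hk
      constructor
      · dsimp only; omega
      constructor
      · dsimp only; omega
      constructor
      · dsimp only; omega
      · intro _; dsimp only; omega

lemma ell_eq (k : ℕ) : ell k = (pq k).1 + 2 * (pq k).2 := by
  rw [ell, pq_succ]; dsimp only; ring

lemma ell_pos (k : ℕ) : 0 < ell k := by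
  rw [ell_eq]; have := pq_facts k; omega

lemma ell_le_three (k : ℕ) : ell (k + 1) ≤ 3 * ell k := by
  rw [ell_eq, ell_eq, pq_succ]; have := pq_facts k; dsimp only; omega

lemma two_pow_le_ell : ∀ k, 2 ^ k ≤ ell k := by
  intro k
  induction k with
  | zero => rw [ell_eq]; have := pq_facts 0; simpa using by omega
  | succ k ih =>
    rcases Nat.eq_zero_or_pos k with hk | hk
    · subst hk; norm_num [ell, pq, av]
    · have h2 : 2 * ell k ≤ ell (k + 1) := by
        rw [ell_eq, ell_eq, pq_succ]
        have h := pq_facts k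
        have := h.2.2.2 hk
        dsimp only; omega
      calc (2:ℤ) ^ (k+1) = 2 * 2 ^ k := by ring
        _ ≤ 2 * ell k := by linarith
        _ ≤ ell (k + 1) := h2

def S : ℕ → ℤ
  | 0 => 1
  | k + 1 => S k + ell (k + 1)

lemma S_pos (k : ℕ) : 0 < S k := by
  induction k with
  | zero => norm_num [S]
  | succ k ih => have := ell_pos (k + 1); rw [S]; omega

lemma ell_le_S {k : ℕ} (hk : 1 ≤ k) : ell k ≤ S k := by
  obtain ⟨j, rfl⟩ := Nat.exists_eq_add_of_le hk
  rw [show 1 + j = j + 1 from by omega, S]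
  have := S_pos j; omega

lemma gap (K : ℕ) : ell (K + 1) ≤ 4 * S K + 1 := by
  rcases Nat.eq_zero_or_pos K with hK | hK
  · subst hK
    norm_num [ell, pq, av, S]
  · have h1 := ell_le_three K
    have h2 := ell_le_S hK
    have h3 := S_pos K
    omega

lemma N_congr (e e' : ℕ → ℤ) : ∀ K, (∀ i, i ≤ K → e i = e' i) → N e K = N e' K := by
  intro K
  induction K with
  | zero => intro h; simp [N, h 0 (le_refl 0)]
  | succ K ih =>
    intro h
    rw [N, N, ih (fun i hi => h i (by omega)), h (K + 1) (le_refl _)]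

lemma rep : ∀ K, ∀ n : ℤ, |n| ≤ 2 * S K → ∃ e : ℕ → ℤ, (∀ i, |e i| ≤ 2) ∧ N e K = n := by
  intro K
  induction K with
  | zero =>
    intro n hn
    refine ⟨fun _ => n, fun i => ?_, rfl⟩
    simpa [S] using hn
  | succ K ih =>
    intro n hn
    set w := ell (K + 1) with hw
    have hgap : w ≤ 4 * S K + 1 := gap K
    have hwpos : 0 < w := ell_pos (K + 1)
    have hSpos : 0 < S K := S_pos K
    have hn' : |n| ≤ 2 * S K + 2 * w := by rw [S] at hn; omega
    have hc : ∃ c : ℤ, |c| ≤ 2 ∧ |n - c * w| ≤ 2 * S K := by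
      have hn2 := abs_le.mp hn'
      rcases le_or_gt (|n|) (2 * S K) with h | h
      · exact ⟨0, by norm_num, by simpa using h⟩
      rcases le_or_gt 0 n with hpos | hneg
      · have h' : 2 * S K < n := by rwa [abs_of_nonneg hpos] at h
        rcases le_or_gt n (w + 2 * S K) with h1 | h1
        · exact ⟨1, by norm_num, by rw [abs_le]; constructor <;> omega⟩
        · exact ⟨2, by norm_num, by rw [abs_le]; constructor <;> omega⟩
      · have h' : 2 * S K < -n := by rwa [abs_of_neg hneg] at h
        rcases le_or_gt (-n) (w + 2 * S K) with h1 | h1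
        · exact ⟨-1, by norm_num, by rw [abs_le]; constructor <;> omega⟩
        · exact ⟨-2, by norm_num, by rw [abs_le]; constructor <;> omega⟩
    obtain ⟨c, hc2, hcr⟩ := hc
    obtain ⟨e, he2, heN⟩ := ih (n - c * w) hcr
    refine ⟨fun i => if i = K + 1 then c else e i, fun i => ?_, ?_⟩
    · by_cases hi : i = K + 1 <;> simp [hi, hc2, he2 i]
    · rw [N, if_pos rfl, ← hw,
        N_congr _ e K (fun i hi => by simp [Nat.ne_of_lt (by omega : i < K + 1)]), heN]
      ring

lemma abs_le_two_S_size (n : ℤ) : |n| ≤ 2 * S n.natAbs.size := by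
  rcases eq_or_ne n 0 with rfl | hn
  · simp [S]
  · have hK : 1 ≤ n.natAbs.size := by
      rw [Nat.one_le_iff_ne_zero, Ne, Nat.size_eq_zero]
      simpa using hn
    have h1 : (n.natAbs : ℤ) < 2 ^ n.natAbs.size := by
      have := Nat.lt_size_self n.natAbs
      exact_mod_cast this
    have h2 := two_pow_le_ell n.natAbs.size
    have h3 := ell_le_S hK
    rw [Int.abs_eq_natAbs]
    have := S_pos n.natAbs.size
    omega
end ElemWordAux

namespace ElemWordMat

open Matrix ElemWordAux

variable {m : ℕ}

lemma std_mul_ne {i j k l : Fin m} (h : j ≠ k) (a b : ℤ) :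
    single i j a * single k l b = 0 :=
  Matrix.single_mul_single_of_ne (c := a) i j k h b

lemma std_neg (i j : Fin m) (a : ℤ) :
    single i j (-a) = -(single i j a) := by
  ext a' b'
  simp [single, apply_ite Neg.neg]

lemma std_sub (i j : Fin m) (a b : ℤ) :
    single i j (a - b) = single i j a - single i j b := by
  rw [sub_eq_add_neg, Matrix.single_add, std_neg, sub_eq_add_neg]

/-- elementary transvection over ℤ -/
def T (i j : Fin m) (c : ℤ) : Matrix (Fin m) (Fin m) ℤ := 1 + single i j c

lemma T_mul {i j : Fin m} (h : i ≠ j) (a b : ℤ) : T i j a * T i j b = T i j (a + b) := by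
  simp only [T, add_mul, mul_add, one_mul, mul_one, std_mul_ne (Ne.symm h), add_zero,
    Matrix.single_add]
  abel

lemma T_zero (i j : Fin m) : T i j 0 = 1 := by
  simp [T, Matrix.single_zero]

variable (i0 i1 i2 : Fin m)

def u (x z : ℤ) : Matrix (Fin m) (Fin m) ℤ := T i0 i2 x * T i0 i1 z

def gmat : Matrix (Fin m) (Fin m) ℤ := T i1 i2 (-1) * T i2 i1 (-1)

def hmat : Matrix (Fin m) (Fin m) ℤ := T i2 i1 1 * T i1 i2 1

variable {i0 i1 i2}
variable (h01 : i0 ≠ i1) (h02 : i0 ≠ i2) (h12 : i1 ≠ i2)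

section
include h01 h02 h12

lemma T01_mul_u (c x z : ℤ) : T i0 i1 c * u i0 i1 i2 x z = u i0 i1 i2 x (c + z) := by
  simp only [u, T, mul_add, add_mul, sub_mul, mul_sub, one_mul, mul_one, mul_neg, neg_mul, neg_neg, two_mul,
    Matrix.single_mul_single_same, std_mul_ne h01, std_mul_ne (Ne.symm h01),
    std_mul_ne h02, std_mul_ne (Ne.symm h02), std_mul_ne h12, std_mul_ne (Ne.symm h12),
    Matrix.single_add, std_sub, std_neg,
    mul_zero, zero_mul, add_zero, zero_add, neg_zero]
  abel

lemma u_mul (x z x' z' : ℤ) :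
    u i0 i1 i2 x z * u i0 i1 i2 x' z' = u i0 i1 i2 (x + x') (z + z') := by
  simp only [u, T, mul_add, add_mul, sub_mul, mul_sub, one_mul, mul_one, mul_neg, neg_mul, neg_neg, two_mul,
    Matrix.single_mul_single_same, std_mul_ne h01, std_mul_ne (Ne.symm h01),
    std_mul_ne h02, std_mul_ne (Ne.symm h02), std_mul_ne h12, std_mul_ne (Ne.symm h12),
    Matrix.single_add, std_sub, std_neg,
    mul_zero, zero_mul, add_zero, zero_add, neg_zero]
  abel

lemma push_g (x z : ℤ) :
    gmat i1 i2 * u i0 i1 i2 x z = u i0 i1 i2 (2 * x + z) (x + z) * gmat i1 i2 := by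
  simp only [u, gmat, T, mul_add, add_mul, sub_mul, mul_sub, one_mul, mul_one, mul_neg, neg_mul, neg_neg, two_mul,
    Matrix.single_mul_single_same, std_mul_ne h01, std_mul_ne (Ne.symm h01),
    std_mul_ne h02, std_mul_ne (Ne.symm h02), std_mul_ne h12, std_mul_ne (Ne.symm h12),
    Matrix.single_add, std_sub, std_neg,
    mul_zero, zero_mul, add_zero, zero_add, neg_zero]
  abel

lemma push_h (x z : ℤ) :
    hmat i1 i2 * u i0 i1 i2 x z = u i0 i1 i2 (x - z) (2 * z - x) * hmat i1 i2 := by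
  simp only [u, hmat, T, mul_add, add_mul, sub_mul, mul_sub, one_mul, mul_one, mul_neg, neg_mul, neg_neg, two_mul,
    Matrix.single_mul_single_same, std_mul_ne h01, std_mul_ne (Ne.symm h01),
    std_mul_ne h02, std_mul_ne (Ne.symm h02), std_mul_ne h12, std_mul_ne (Ne.symm h12),
    Matrix.single_add, std_sub, std_neg,
    mul_zero, zero_mul, add_zero, zero_add, neg_zero]
  abel

omit h01 h02 in
lemma g_h : gmat i1 i2 * hmat i1 i2 = 1 := by
  unfold gmat hmat
  rw [mul_assoc, ← mul_assoc (T i2 i1 (-1)), T_mul (Ne.symm h12), neg_add_cancel, T_zero,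
    one_mul, T_mul h12, neg_add_cancel, T_zero]

omit h01 h02 in
lemma h_g : hmat i1 i2 * gmat i1 i2 = 1 := by
  unfold gmat hmat
  rw [mul_assoc, ← mul_assoc (T i1 i2 1), T_mul h12, add_neg_cancel, T_zero,
    one_mul, T_mul (Ne.symm h12), add_neg_cancel, T_zero]

lemma push_gpow (K : ℕ) (x z : ℤ) :
    gmat i1 i2 ^ K * u i0 i1 i2 x z =
      u i0 i1 i2 (av^[K] (x, z)).1 (av^[K] (x, z)).2 * gmat i1 i2 ^ K := by
  induction K generalizing x z with
  | zero => simp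
  | succ K ih =>
    rw [pow_succ, mul_assoc, push_g h01 h02 h12, ← mul_assoc, ih, mul_assoc, ← pow_succ,
      Function.iterate_succ_apply]
    rfl

end

end ElemWordMat

namespace ElemWordMat

open Matrix ElemWordAux

variable {m : ℕ}

variable (i0 i1 i2 : Fin m)

/-- word for `T i0 i1 c` -/
def uw (c : ℤ) : List (Matrix (Fin m) (Fin m) ℤ) :=
  List.replicate c.natAbs (T i0 i1 (if 0 ≤ c then 1 else -1))

def gw : List (Matrix (Fin m) (Fin m) ℤ) := [T i1 i2 (-1), T i2 i1 (-1)]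

def hw : List (Matrix (Fin m) (Fin m) ℤ) := [T i2 i1 1, T i1 i2 1]

def Wmid (cs : List ℤ) : List (Matrix (Fin m) (Fin m) ℤ) :=
  cs.flatMap (fun c => uw i0 i1 c ++ hw i1 i2)

def word (e : ℕ → ℤ) (K : ℕ) : List (Matrix (Fin m) (Fin m) ℤ) :=
  (List.replicate K (gw i1 i2)).flatten ++ Wmid i0 i1 i2 (sym e K) ++
    (List.replicate (K + 1) (gw i1 i2)).flatten

variable {i0 i1 i2}
variable (h01 : i0 ≠ i1) (h02 : i0 ≠ i2) (h12 : i1 ≠ i2)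

lemma T_pow (h : i0 ≠ i1) (k : ℕ) (s : ℤ) : T i0 i1 s ^ k = T i0 i1 (k * s) := by
  induction k with
  | zero => simp [T_zero]
  | succ k ih =>
    rw [pow_succ, ih, T_mul h]
    congr 1
    push_cast
    ring

include h01 in
lemma uw_prod (c : ℤ) : (uw i0 i1 c).prod = T i0 i1 c := by
  rw [uw, List.prod_replicate, T_pow h01]
  have : (c.natAbs : ℤ) * (if 0 ≤ c then 1 else -1) = c := by split_ifs with h <;> omega
  rw [this]

lemma gw_prod : (gw i1 i2).prod = gmat i1 i2 := by
  simp [gw, gmat]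

lemma hw_prod : (hw i1 i2).prod = hmat i1 i2 := by
  simp [hw, hmat]

lemma gw_flatten_prod (k : ℕ) :
    ((List.replicate k (gw i1 i2)).flatten).prod = gmat i1 i2 ^ k := by
  induction k with
  | zero => simp
  | succ k ih =>
    rw [List.replicate_succ, List.flatten_cons, List.prod_append, ih, gw_prod, pow_succ']

include h01 h02 h12 in
lemma Wmid_prod (cs : List ℤ) :
    (Wmid i0 i1 i2 cs).prod * gmat i1 i2 ^ cs.length =
      u i0 i1 i2 (vec cs).1 (vec cs).2 := by
  induction cs with
  | nil => simp [Wmid, ElemWordAux.vec, u, T_zero]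
  | cons c t ih =>
    have e1 : (vec (c :: t)).1 = (vec t).1 - (vec t).2 := by
      show (bv (vec t)).1 + 0 = _
      simp [bv]
    have e2 : (vec (c :: t)).2 = c + (2 * (vec t).2 - (vec t).1) := by
      show (bv (vec t)).2 + c = _
      simp [bv]; ring
    have hstep : (Wmid i0 i1 i2 (c :: t)).prod =
        T i0 i1 c * (hmat i1 i2 * (Wmid i0 i1 i2 t).prod) := by
      rw [Wmid, List.flatMap_cons, List.prod_append, List.prod_append, uw_prod h01, hw_prod]
      rw [mul_assoc]
      rfl
    calc (Wmid i0 i1 i2 (c :: t)).prod * gmat i1 i2 ^ (c :: t).length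
        = T i0 i1 c * (hmat i1 i2 * ((Wmid i0 i1 i2 t).prod * gmat i1 i2 ^ t.length) *
            gmat i1 i2) := by
          rw [hstep, List.length_cons, pow_succ]
          simp only [mul_assoc]
      _ = T i0 i1 c * (u i0 i1 i2 ((vec t).1 - (vec t).2) (2 * (vec t).2 - (vec t).1) *
            (hmat i1 i2 * gmat i1 i2)) := by
          rw [ih, push_h h01 h02 h12]
          simp only [mul_assoc]
      _ = u i0 i1 i2 ((vec t).1 - (vec t).2) (c + (2 * (vec t).2 - (vec t).1)) := by
          rw [h_g h12, mul_one, T01_mul_u h01 h02 h12]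
      _ = u i0 i1 i2 (vec (c :: t)).1 (vec (c :: t)).2 := by rw [e1, e2]

include h01 h02 h12 in
lemma word_prod (e : ℕ → ℤ) (K : ℕ) :
    (word i0 i1 i2 e K).prod = T i0 i1 (N e K) := by
  have hu : IsUnit (gmat i1 i2 : Matrix (Fin m) (Fin m) ℤ) :=
    ⟨⟨gmat i1 i2, hmat i1 i2, g_h h12, h_g h12⟩, rfl⟩
  have hcancel : (word i0 i1 i2 e K).prod * gmat i1 i2 ^ K =
      T i0 i1 (N e K) * gmat i1 i2 ^ K := by
    have hlen : K + 1 + K = (sym e K).length := by rw [sym_length]; omega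
    rw [word, List.prod_append, List.prod_append, gw_flatten_prod, gw_flatten_prod,
      mul_assoc, mul_assoc, ← pow_add, hlen,
      Wmid_prod h01 h02 h12, push_gpow h01 h02 h12, Prod.mk.eta, key_arith]
    simp [u, T_zero]
  exact (hu.pow K).mul_right_cancel hcancel

end ElemWordMat

namespace ElemWordMat

open Matrix ElemWordAux

variable {m : ℕ} {i0 i1 i2 : Fin m}

lemma gw_flatten_length (k : ℕ) :
    ((List.replicate k (gw i1 i2)).flatten).length = 2 * k := by
  induction k with
  | zero => rfl
  | succ k ih =>
    rw [List.replicate_succ, List.flatten_cons, List.length_append, ih]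
    simp [gw]; omega

lemma Wmid_length (cs : List ℤ) (hb : ∀ c ∈ cs, c.natAbs ≤ 2) :
    (Wmid i0 i1 i2 cs).length ≤ 4 * cs.length := by
  induction cs with
  | nil => simp [Wmid]
  | cons c t ih =>
    have h1 : (Wmid i0 i1 i2 (c :: t)).length =
        c.natAbs + 2 + (Wmid i0 i1 i2 t).length := by
      simp only [Wmid, List.flatMap_cons, List.length_append, uw, hw,
        List.length_replicate, List.length_cons, List.length_nil]
    have h2 := ih (fun c hc => hb c (List.mem_cons_of_mem _ hc))
    have h3 := hb c (List.mem_cons_self)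
    rw [h1, List.length_cons]
    omega

lemma sym_mem (e : ℕ → ℤ) (K : ℕ) : ∀ c ∈ sym e K, ∃ i, c = e i := by
  induction K with
  | zero =>
    intro c hc
    rw [sym, List.mem_singleton] at hc
    exact ⟨0, hc⟩
  | succ K ih =>
    intro c hc
    rw [sym, List.mem_cons, List.mem_append, List.mem_singleton] at hc
    rcases hc with h | h | h
    · exact ⟨K + 1, h⟩
    · exact ih c h
    · exact ⟨K + 1, h⟩

lemma word_length (e : ℕ → ℤ) (K : ℕ) (he : ∀ i, |e i| ≤ 2) :
    (word i0 i1 i2 e K).length ≤ 12 * K + 6 := by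
  have hb : ∀ c ∈ sym e K, c.natAbs ≤ 2 := by
    intro c hc
    obtain ⟨i, rfl⟩ := sym_mem e K c hc
    have := abs_le.mp (he i)
    omega
  have h1 := Wmid_length (i0 := i0) (i1 := i1) (i2 := i2) (sym e K) hb
  rw [sym_length] at h1
  rw [word, List.length_append, List.length_append, gw_flatten_length, gw_flatten_length]
  omega

/-- generator predicate -/
def IsGen (A : Matrix (Fin m) (Fin m) ℤ) : Prop :=
  ∃ i j : Fin m, i ≠ j ∧ (A = T i j 1 ∨ A = T i j (-1))

variable (h01 : i0 ≠ i1) (h02 : i0 ≠ i2) (h12 : i1 ≠ i2)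

include h01 h12 in
lemma word_gen (e : ℕ → ℤ) (K : ℕ) : ∀ A ∈ word i0 i1 i2 e K, IsGen A := by
  have hgw : ∀ A ∈ gw i1 i2, IsGen A := by
    intro A hA
    rw [gw, List.mem_cons, List.mem_singleton] at hA
    rcases hA with rfl | rfl
    · exact ⟨i1, i2, h12, Or.inr rfl⟩
    · exact ⟨i2, i1, h12.symm, Or.inr rfl⟩
  have hhw : ∀ A ∈ hw i1 i2, IsGen A := by
    intro A hA
    rw [hw, List.mem_cons, List.mem_singleton] at hA
    rcases hA with rfl | rfl
    · exact ⟨i2, i1, h12.symm, Or.inl rfl⟩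
    · exact ⟨i1, i2, h12, Or.inl rfl⟩
  have huw : ∀ (c : ℤ), ∀ A ∈ uw i0 i1 c, IsGen A := by
    intro c A hA
    rw [uw, List.mem_replicate] at hA
    rcases hA with ⟨-, rfl⟩
    refine ⟨i0, i1, h01, ?_⟩
    split_ifs with h
    · exact Or.inl rfl
    · exact Or.inr rfl
  intro A hA
  rw [word, List.mem_append, List.mem_append] at hA
  rcases hA with (h | h) | h
  · rw [List.mem_flatten] at h
    obtain ⟨l, hl, hAl⟩ := h
    rw [List.mem_replicate] at hl
    exact hgw A (hl.2 ▸ hAl)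
  · rw [Wmid, List.mem_flatMap] at h
    obtain ⟨c, -, hAc⟩ := h
    rw [List.mem_append] at hAc
    rcases hAc with h' | h'
    · exact huw c A h'
    · exact hhw A h'
  · rw [List.mem_flatten] at h
    obtain ⟨l, hl, hAl⟩ := h
    rw [List.mem_replicate] at hl
    exact hgw A (hl.2 ▸ hAl)

section Transport

variable (R : Type) [Ring R]

lemma map_std (i j : Fin m) (c : ℤ) :
    (single i j c).map (Int.cast : ℤ → R) = single i j ((c : R)) := by
  ext a b
  simp [single, Matrix.map_apply, apply_ite (Int.cast : ℤ → R)]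

lemma map_T (i j : Fin m) (c : ℤ) :
    ((Int.castRingHom R).mapMatrix : Matrix (Fin m) (Fin m) ℤ →+* Matrix (Fin m) (Fin m) R)
        (T i j c) = 1 + single i j ((c : R)) := by
  have h1 : ((Int.castRingHom R).mapMatrix :
      Matrix (Fin m) (Fin m) ℤ →+* Matrix (Fin m) (Fin m) R) (T i j c) =
      (Int.castRingHom R).mapMatrix (1 : Matrix (Fin m) (Fin m) ℤ) +
        (Int.castRingHom R).mapMatrix (single i j c) := by
    rw [T]; exact _root_.map_add _ _ _
  rw [h1, _root_.map_one, RingHom.mapMatrix_apply, Int.coe_castRingHom, map_std]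

end Transport

end ElemWordMat

open ElemWordAux ElemWordMat

/-- For `m ≥ 3` there is a constant `C` (depending only on `m`) such that in `E_m(R)` for
any unital ring `R`, the element `E_{1,2}(n·1_R)` can be written as a word in the
generators `E_{i,j}(±1)` of length at most `C·(1 + log₂(1 + |n|))`. -/
theorem elementary_integer_word_length_log
    {m : ℕ} (hm : 3 ≤ m) :
    ∃ C : ℝ, ∀ (R : Type) [Ring R], ∀ n : ℤ,
      ∃ l : List (Matrix (Fin m) (Fin m) R),
        (∀ x ∈ l, ∃ i j : Fin m, i ≠ j ∧
          (x = 1 + Matrix.single i j (1 : R) ∨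
            x = 1 + Matrix.single i j (-1 : R))) ∧
        l.prod = 1 + Matrix.single (⟨0, by omega⟩ : Fin m) (⟨1, by omega⟩ : Fin m)
          ((n : R)) ∧
        (l.length : ℝ) ≤ C * (1 + Real.logb 2 (1 + |(n : ℝ)|)) := by
  refine ⟨18, fun R _ n => ?_⟩
  set i0 : Fin m := ⟨0, by omega⟩ with hi0
  set i1 : Fin m := ⟨1, by omega⟩ with hi1
  set i2 : Fin m := ⟨2, by omega⟩ with hi2
  have h01 : i0 ≠ i1 := by simp [hi0, hi1, Fin.ext_iff]
  have h02 : i0 ≠ i2 := by simp [hi0, hi2, Fin.ext_iff]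
  have h12 : i1 ≠ i2 := by simp [hi1, hi2, Fin.ext_iff]
  set K : ℕ := n.natAbs.size with hK
  obtain ⟨e, he, heN⟩ := ElemWordAux.rep K n (abs_le_two_S_size n)
  set lz : List (Matrix (Fin m) (Fin m) ℤ) := word i0 i1 i2 e K with hlz
  set φ : Matrix (Fin m) (Fin m) ℤ →+* Matrix (Fin m) (Fin m) R :=
    (Int.castRingHom R).mapMatrix with hφ
  refine ⟨lz.map φ, ?_, ?_, ?_⟩
  · intro x hx
    rw [List.mem_map] at hx
    obtain ⟨A, hA, rfl⟩ := hx
    obtain ⟨i, j, hij, hA1⟩ := word_gen h01 h12 e K A hA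
    refine ⟨i, j, hij, ?_⟩
    rcases hA1 with rfl | rfl
    · left; rw [map_T]; norm_num
    · right; rw [map_T]; norm_num
  · rw [← map_list_prod φ lz, hlz, word_prod h01 h02 h12, heN, map_T]
  · rw [List.length_map]
    have hlen : (lz.length : ℝ) ≤ 12 * (K : ℝ) + 6 := by
      have := word_length (i0 := i0) (i1 := i1) (i2 := i2) e K he
      rw [← hlz] at this
      exact_mod_cast this
    have hlog0 : (0 : ℝ) ≤ Real.logb 2 (1 + |(n : ℝ)|) := by
      apply Real.logb_nonneg one_lt_two
      have := abs_nonneg ((n : ℝ))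
      linarith
    have hKlog : (K : ℝ) ≤ 1 + Real.logb 2 (1 + |(n : ℝ)|) := by
      rcases eq_or_ne n 0 with rfl | hn
      · simp [hK, Nat.size_zero]
      · have hK1 : 1 ≤ K := by
          rw [hK, Nat.one_le_iff_ne_zero, Ne, Nat.size_eq_zero]
          simpa using hn
        have hpow : 2 ^ (K - 1) ≤ n.natAbs := by
          by_contra hcon
          push_neg at hcon
          have : K ≤ K - 1 := Nat.size_le.mpr hcon
          omega
        have hpowR : (2 : ℝ) ^ (K - 1) ≤ 1 + |(n : ℝ)| := by
          have h1 : ((2 ^ (K - 1) : ℕ) : ℝ) ≤ ((n.natAbs : ℕ) : ℝ) := by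
            exact_mod_cast hpow
          have h2 : ((n.natAbs : ℕ) : ℝ) = |(n : ℝ)| := by
            push_cast [Nat.cast_natAbs]
            norm_num
          rw [h2] at h1
          push_cast at h1 ⊢
          linarith
        have hlb : ((K : ℝ) - 1) ≤ Real.logb 2 (1 + |(n : ℝ)|) := by
          have h3 : Real.logb 2 ((2 : ℝ) ^ (K - 1)) ≤ Real.logb 2 (1 + |(n : ℝ)|) :=
            Real.logb_le_logb_of_le one_lt_two (by positivity) hpowR
          rw [Real.logb_pow, Real.logb_self_eq_one one_lt_two, mul_one,
            Nat.cast_sub hK1, Nat.cast_one] at h3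
          exact h3
        linarith
    linarith
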